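/- Suppose ε ↦ ε'(ε) and ε ↦ ε''(ε) are functions from (0,1] to (0,∞) with ε''(ε) → 0 and (ε''(ε)/ε'(ε)) / ((ε''(ε))^β · l(1/ε''(ε))) → 1 as ε → 0+. Define a_ε(y) = (ε'(ε)/ε''(ε))·a(ε''(ε)·y) and let ā(y) = A₊·y^β for y ≥ 0 and ā(y) = −A₋·|y|^β for y < 0. Then for every R > 0, sup_{|y| ≤ R} |a_ε(y) − ā(y)| → 0 as ε → 0+. -/

import Mathlib

open Filter Set MeasureTheory

set_option maxHeartbeats 1000000

/-- Karamata UCT core: uniform smallness of `h(u+t)-h(u)` for `t ∈ [0,1]`. -/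
lemma uct_core (h : ℝ → ℝ) (hcont : Continuous h)
    (hsv : ∀ t : ℝ, Tendsto (fun u => h (u + t) - h u) atTop (nhds 0)) :
    ∀ η > (0:ℝ), ∃ U : ℝ, ∀ u ≥ U, ∀ t ∈ Icc (0:ℝ) 1, |h (u + t) - h u| < η := by
  by_contra hc
  push_neg at hc
  obtain ⟨η, hη, hbad⟩ := hc
  have hach : ∀ n : ℕ, ∃ u : ℝ, u ≥ (n:ℝ) ∧ ∃ t ∈ Icc (0:ℝ) 1, η ≤ |h (u + t) - h u| := by
    intro n
    obtain ⟨u, hu, t, ht, hge⟩ := hbad (n:ℝ)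
    exact ⟨u, hu, t, ht, hge⟩
  choose u hu t ht hge using hach
  have hut : Tendsto u atTop atTop :=
    tendsto_atTop_mono hu tendsto_natCast_atTop_atTop
  have hut' : Tendsto (fun n => u n + t n) atTop atTop := by
    apply tendsto_atTop_mono (fun n => ?_) hut
    exact le_add_of_nonneg_right (ht n).1
  set F : ℕ → ℝ → ℝ := fun n s =>
    |h (u n + s) - h (u n)| + |h (u n + t n + s) - h (u n + t n)| with hF
  have hFtend : ∀ s : ℝ, Tendsto (fun n => F n s) atTop (nhds 0) := by
    intro s
    have h1 : Tendsto (fun n => h (u n + s) - h (u n)) atTop (nhds 0) :=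
      (hsv s).comp hut
    have h2 : Tendsto (fun n => h (u n + t n + s) - h (u n + t n)) atTop (nhds 0) :=
      (hsv s).comp hut'
    have := (h1.abs.add h2.abs)
    simpa using this
  have hmeas : ∀ n, StronglyMeasurable (F n) := by
    intro n
    apply Continuous.stronglyMeasurable
    fun_prop
  obtain ⟨tt, htts, httm, httμ, httu⟩ :=
    MeasureTheory.tendstoUniformlyOn_of_ae_tendsto (μ := (volume : Measure ℝ))
      (s := Icc (-1:ℝ) 2) hmeas stronglyMeasurable_const measurableSet_Icc
      (by simp [Real.volume_Icc])
      (Eventually.of_forall fun s _ => hFtend s) (by norm_num : (0:ℝ) < 1/8)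
  set E : Set ℝ := Icc (-1:ℝ) 2 \ tt with hE
  have hEmeas : MeasurableSet E := measurableSet_Icc.diff httm
  -- uniform convergence on E
  rw [Metric.tendstoUniformlyOn_iff] at httu
  obtain ⟨N, hN⟩ := (httu (η/2) (by linarith)).exists_forall_of_atTop
  -- the translate of E
  set B : Set ℝ := (fun x => x + t N) ⁻¹' E with hB
  have hBmeas : MeasurableSet B := hEmeas.preimage (measurable_add_const _)
  have hBμ : volume B = volume E := by
    exact measure_preimage_add_right volume (t N) E
  have hnon : (E ∩ B).Nonempty := by
    by_contra hemp
    rw [Set.not_nonempty_iff_eq_empty] at hemp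
    have hdisj : Disjoint E B := Set.disjoint_iff_inter_eq_empty.mpr hemp
    have hU : volume (E ∪ B) = volume E + volume B := measure_union hdisj hBmeas
    have hsub : E ∪ B ⊆ Icc (-2:ℝ) 2 := by
      rintro x (hx | hx)
      · exact ⟨by linarith [hx.1.1], hx.1.2⟩
      · have hx' := hx
        simp only [hB, Set.mem_preimage, hE, Set.mem_diff, Set.mem_Icc] at hx'
        constructor
        · have := hx'.1.1
          have := (ht N).2
          linarith
        · have := hx'.1.2
          have := (ht N).1
          linarith
    have h4 : volume (E ∪ B) ≤ ENNReal.ofReal 4 := by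
      calc volume (E ∪ B) ≤ volume (Icc (-2:ℝ) 2) := measure_mono hsub
        _ = ENNReal.ofReal 4 := by rw [Real.volume_Icc]; norm_num
    have h3 : ENNReal.ofReal 3 ≤ volume E + ENNReal.ofReal (1/8) := by
      have hsub2 : Icc (-1:ℝ) 2 ⊆ E ∪ tt := by
        intro x hx
        by_cases hxt : x ∈ tt
        · exact Or.inr hxt
        · exact Or.inl ⟨hx, hxt⟩
      calc ENNReal.ofReal 3 = volume (Icc (-1:ℝ) 2) := by rw [Real.volume_Icc]; norm_num
        _ ≤ volume (E ∪ tt) := measure_mono hsub2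
        _ ≤ volume E + volume tt := measure_union_le _ _
        _ ≤ volume E + ENNReal.ofReal (1/8) := by gcongr
    have hfinal : ENNReal.ofReal 6 ≤ ENNReal.ofReal (17/4) := by
      have : ENNReal.ofReal 3 + ENNReal.ofReal 3
          ≤ (volume E + ENNReal.ofReal (1/8)) + (volume B + ENNReal.ofReal (1/8)) := by
        rw [hBμ]; exact add_le_add h3 h3
      calc ENNReal.ofReal 6 = ENNReal.ofReal 3 + ENNReal.ofReal 3 := by
            rw [← ENNReal.ofReal_add] <;> norm_num
        _ ≤ (volume E + ENNReal.ofReal (1/8)) + (volume B + ENNReal.ofReal (1/8)) := this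
        _ = volume (E ∪ B) + ENNReal.ofReal (1/4) := by
            rw [hU]
            rw [show ENNReal.ofReal (1/4) = ENNReal.ofReal (1/8) + ENNReal.ofReal (1/8) by
              rw [← ENNReal.ofReal_add] <;> norm_num]
            ring
        _ ≤ ENNReal.ofReal 4 + ENNReal.ofReal (1/4) := by gcongr
        _ = ENNReal.ofReal (17/4) := by rw [← ENNReal.ofReal_add] <;> norm_num
    have := (ENNReal.ofReal_le_ofReal_iff (by norm_num)).mp hfinal
    norm_num at this
  obtain ⟨s0, hs0E, hs0B⟩ := hnon
  have hb1 : F N (s0 + t N) < η/2 := by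
    have h' := hN N le_rfl (s0 + t N) hs0B
    have hnn : 0 ≤ F N (s0 + t N) := add_nonneg (abs_nonneg _) (abs_nonneg _)
    rw [Real.dist_eq, zero_sub, abs_neg, abs_of_nonneg hnn] at h'
    exact h'
  have hb2 : F N s0 < η/2 := by
    have h' := hN N le_rfl s0 hs0E
    have hnn : 0 ≤ F N s0 := add_nonneg (abs_nonneg _) (abs_nonneg _)
    rw [Real.dist_eq, zero_sub, abs_neg, abs_of_nonneg hnn] at h'
    exact h' 
  -- extract the two pieces
  have hp1 : |h (u N + (s0 + t N)) - h (u N)| < η/2 := by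
    exact lt_of_le_of_lt (le_add_of_nonneg_right (abs_nonneg _)) hb1
  have hp2 : |h (u N + t N + s0) - h (u N + t N)| < η/2 := by
    exact lt_of_le_of_lt (le_add_of_nonneg_left (abs_nonneg _)) hb2
  have hkey : h (u N + t N) - h (u N)
      = (h (u N + (s0 + t N)) - h (u N)) - (h (u N + t N + s0) - h (u N + t N)) := by
    rw [show u N + (s0 + t N) = u N + t N + s0 by ring]
    ring
  have : |h (u N + t N) - h (u N)| < η := by
    rw [hkey]
    calc |_ - _| ≤ |h (u N + (s0 + t N)) - h (u N)| + |h (u N + t N + s0) - h (u N + t N)| :=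
          abs_sub _ _
      _ < η := by linarith
  linarith [hge N]

/-- Extension of UCT to `t ∈ [0,N]`. -/
lemma uct_n (h : ℝ → ℝ)
    (huct : ∀ η > (0:ℝ), ∃ U : ℝ, ∀ u ≥ U, ∀ t ∈ Icc (0:ℝ) 1, |h (u + t) - h u| < η) :
    ∀ N : ℕ, ∀ η > (0:ℝ), ∃ U : ℝ, ∀ u ≥ U, ∀ t ∈ Icc (0:ℝ) (N:ℝ), |h (u + t) - h u| < η := by
  intro N
  induction N with
  | zero =>
    intro η hη
    refine ⟨0, fun u _ t ht => ?_⟩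
    have : t = 0 := le_antisymm (by exact_mod_cast ht.2) ht.1
    simp [this, hη]
  | succ N ih =>
    intro η hη
    obtain ⟨U1, hU1⟩ := ih (η/2) (by linarith)
    obtain ⟨U2, hU2⟩ := huct (η/2) (by linarith)
    refine ⟨max U1 U2, fun u hu t ht => ?_⟩
    have hu1 : u ≥ U1 := le_trans (le_max_left _ _) hu
    have hu2 : u ≥ U2 := le_trans (le_max_right _ _) hu
    by_cases htN : t ≤ (N:ℝ)
    · have := hU1 u hu1 t ⟨ht.1, htN⟩
      linarith
    · push_neg at htN
      have hNc : ((N:ℝ)) ≤ (N:ℝ) + 1 := by linarith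
      have h1 : |h (u + (N:ℝ)) - h u| < η/2 :=
        hU1 u hu1 (N:ℝ) ⟨Nat.cast_nonneg N, le_refl _⟩
      have h2 : |h ((u + (N:ℝ)) + (t - (N:ℝ))) - h (u + (N:ℝ))| < η/2 := by
        apply hU2 (u + (N:ℝ)) (by have := Nat.cast_nonneg (α := ℝ) N; linarith)
        constructor
        · linarith
        · have := ht.2
          push_cast at this ⊢
          linarith
      have heq : (u + (N:ℝ)) + (t - (N:ℝ)) = u + t := by ring
      rw [heq] at h2
      calc |h (u + t) - h u|
          = |(h (u + t) - h (u + (N:ℝ))) + (h (u + (N:ℝ)) - h u)| := by ring_nf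
        _ ≤ |h (u + t) - h (u + (N:ℝ))| + |h (u + (N:ℝ)) - h u| := abs_add_le _ _
        _ < η := by linarith

/-- UCT on symmetric intervals `t ∈ [-N,N]`. -/
lemma uct_pm (h : ℝ → ℝ)
    (huct : ∀ η > (0:ℝ), ∃ U : ℝ, ∀ u ≥ U, ∀ t ∈ Icc (0:ℝ) 1, |h (u + t) - h u| < η) :
    ∀ N : ℕ, ∀ η > (0:ℝ), ∃ U : ℝ, ∀ u ≥ U, ∀ t ∈ Icc (-(N:ℝ)) (N:ℝ), |h (u + t) - h u| < η := by
  intro N η hη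
  obtain ⟨U, hU⟩ := uct_n h huct N η hη
  refine ⟨U + (N:ℝ), fun u hu t ht => ?_⟩
  by_cases ht0 : 0 ≤ t
  · exact hU u (by have := Nat.cast_nonneg (α := ℝ) N; linarith) t ⟨ht0, ht.2⟩
  · push_neg at ht0
    have h1 : |h ((u + t) + (-t)) - h (u + t)| < η := by
      apply hU (u + t) (by have := ht.1; linarith)
      exact ⟨by linarith, by have := ht.1; linarith⟩
    rw [show (u + t) + (-t) = u by ring] at h1
    rw [abs_sub_comm]
    exact h1

/-- Potter-type bound in additive form. -/
lemma potter_h (h : ℝ → ℝ)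
    (huct : ∀ η > (0:ℝ), ∃ U : ℝ, ∀ u ≥ U, ∀ t ∈ Icc (0:ℝ) 1, |h (u + t) - h u| < η) :
    ∀ η > (0:ℝ), ∃ U : ℝ, ∀ u ≥ U, ∀ t ≥ (0:ℝ), |h (u + t) - h u| ≤ η * (t + 1) := by
  intro η hη
  obtain ⟨U, hU⟩ := huct η hη
  refine ⟨U, fun u hu t ht0 => ?_⟩
  -- induction on an integer bound for t
  have key : ∀ n : ℕ, ∀ t : ℝ, 0 ≤ t → t ≤ (n:ℝ) → ∀ u ≥ U, |h (u + t) - h u| ≤ η * (t + 1) := by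
    intro n
    induction n with
    | zero =>
      intro t ht0 htn u hu
      have : t = 0 := le_antisymm (by exact_mod_cast htn) ht0
      simp [this]
      positivity
    | succ n ih =>
      intro t ht0 htn u hu
      by_cases ht1 : t ≤ 1
      · have := hU u hu t ⟨ht0, ht1⟩
        nlinarith
      · push_neg at ht1
        have h1 : |h ((u + (t-1)) + 1) - h (u + (t-1))| < η :=
          hU (u + (t-1)) (by linarith) 1 ⟨zero_le_one, le_refl _⟩
        have h2 : |h (u + (t-1)) - h u| ≤ η * ((t-1) + 1) := by
          apply ih (t-1) (by linarith) (by push_cast at htn ⊢; linarith) u hu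
        rw [show (u + (t-1)) + 1 = u + t by ring] at h1
        calc |h (u + t) - h u|
            = |(h (u + t) - h (u + (t-1))) + (h (u + (t-1)) - h u)| := by ring_nf
          _ ≤ |h (u + t) - h (u + (t-1))| + |h (u + (t-1)) - h u| := abs_add_le _ _
          _ ≤ η * (t + 1) := by linarith
  exact key ⌈t⌉₊ t ht0 (Nat.le_ceil t) u hu

/-- Package: additive version of a continuous slowly varying function. -/
lemma sv_h (l : ℝ → ℝ) (hl_cont : ContinuousOn l (Ioi 0)) (hl_pos : ∀ x > (0:ℝ), 0 < l x)
    (hl_sv : ∀ lam > (0:ℝ), Tendsto (fun x => l (lam * x) / l x) atTop (nhds 1)) :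
    ∃ h : ℝ → ℝ,
      (∀ x > (0:ℝ), ∀ lam > (0:ℝ),
        l (lam * x) / l x = Real.exp (h (Real.log x + Real.log lam) - h (Real.log x))) ∧
      (∀ η > (0:ℝ), ∃ U : ℝ, ∀ u ≥ U, ∀ t ∈ Icc (0:ℝ) 1, |h (u + t) - h u| < η) := by
  set h : ℝ → ℝ := fun u => Real.log (l (Real.exp u)) with hdef
  have hcont : Continuous h := by
    rw [continuous_iff_continuousAt]
    intro u
    have hc1 : ContinuousAt l (Real.exp u) :=
      hl_cont.continuousAt (Ioi_mem_nhds (Real.exp_pos u))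
    have hc2 : ContinuousAt Real.log (l (Real.exp u)) :=
      Real.continuousAt_log (ne_of_gt (hl_pos _ (Real.exp_pos u)))
    exact ContinuousAt.comp (ContinuousAt.comp hc2 hc1) Real.continuous_exp.continuousAt
  have hsv : ∀ t : ℝ, Tendsto (fun u => h (u + t) - h u) atTop (nhds 0) := by
    intro t
    have base : Tendsto (fun x => l (Real.exp t * x) / l x) atTop (nhds 1) :=
      hl_sv (Real.exp t) (Real.exp_pos t)
    have comp : Tendsto (fun u => l (Real.exp t * Real.exp u) / l (Real.exp u)) atTop (nhds 1) :=
      base.comp Real.tendsto_exp_atTop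
    have hlog : Tendsto (fun u => Real.log (l (Real.exp t * Real.exp u) / l (Real.exp u)))
        atTop (nhds 0) := by
      have := (Real.continuousAt_log one_ne_zero).tendsto.comp comp
      rwa [Real.log_one] at this
    apply hlog.congr
    intro u
    have hp1 : 0 < l (Real.exp t * Real.exp u) :=
      hl_pos _ (by positivity)
    have hp2 : 0 < l (Real.exp u) := hl_pos _ (Real.exp_pos u)
    rw [Real.log_div (ne_of_gt hp1) (ne_of_gt hp2)]
    simp only [hdef]
    rw [← Real.exp_add]
    ring_nf
  refine ⟨h, ?_, uct_core h hcont hsv⟩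
  intro x hx lam hlam
  have h1 : Real.exp (Real.log x + Real.log lam) = lam * x := by
    rw [Real.exp_add, Real.exp_log hx, Real.exp_log hlam]; ring
  simp only [hdef]
  rw [h1, Real.exp_log hx,
    Real.exp_sub, Real.exp_log (hl_pos _ (by positivity)), Real.exp_log (hl_pos x hx)]

/-- Uniform convergence of `l(λx)/l(x)` to 1 for `λ` in a compact set of `(0,∞)`. -/
lemma l_compact (l : ℝ → ℝ) (hl_cont : ContinuousOn l (Ioi 0)) (hl_pos : ∀ x > (0:ℝ), 0 < l x)
    (hl_sv : ∀ lam > (0:ℝ), Tendsto (fun x => l (lam * x) / l x) atTop (nhds 1))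
    (c d : ℝ) (hc : 0 < c) (hcd : c ≤ d) :
    ∀ η > (0:ℝ), ∃ X : ℝ, 0 < X ∧ ∀ x ≥ X, ∀ lam ∈ Icc c d, |l (lam * x) / l x - 1| < η := by
  obtain ⟨h, hconv, huct⟩ := sv_h l hl_cont hl_pos hl_sv
  intro η hη
  set η' : ℝ := min 1 (η/4) with hη'def
  have hη' : 0 < η' := lt_min one_pos (by linarith)
  set N : ℕ := ⌈max |Real.log c| |Real.log d|⌉₊ with hNdef
  obtain ⟨U, hU⟩ := uct_pm h huct N η' hη'
  refine ⟨Real.exp U, Real.exp_pos U, fun x hx lam hlam => ?_⟩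
  have hx0 : 0 < x := lt_of_lt_of_le (Real.exp_pos U) hx
  have hlam0 : 0 < lam := lt_of_lt_of_le hc hlam.1
  have hlogx : Real.log x ≥ U := by
    rw [← Real.log_exp U]
    exact Real.log_le_log (Real.exp_pos U) hx
  have hloglam : Real.log lam ∈ Icc (-(N:ℝ)) (N:ℝ) := by
    have hmem : |Real.log lam| ≤ max |Real.log c| |Real.log d| :=
      abs_le_max_abs_abs (Real.log_le_log hc hlam.1) (Real.log_le_log hlam0 hlam.2)
    have hN : max |Real.log c| |Real.log d| ≤ (N:ℝ) := Nat.le_ceil _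
    have := abs_le.mp (le_trans hmem hN)
    exact ⟨this.1, this.2⟩
  have hs := hU (Real.log x) hlogx (Real.log lam) hloglam
  rw [hconv x hx0 lam hlam0]
  set s : ℝ := h (Real.log x + Real.log lam) - h (Real.log x) with hsdef
  have hs1 : |s| ≤ 1 := le_of_lt (lt_of_lt_of_le hs (min_le_left _ _))
  have := Real.abs_exp_sub_one_le hs1
  have h4 : |s| < η/4 := lt_of_lt_of_le hs (min_le_right _ _)
  linarith

/-- Potter-type bound. -/
lemma l_potter (l : ℝ → ℝ) (hl_cont : ContinuousOn l (Ioi 0)) (hl_pos : ∀ x > (0:ℝ), 0 < l x)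
    (hl_sv : ∀ lam > (0:ℝ), Tendsto (fun x => l (lam * x) / l x) atTop (nhds 1)) :
    ∀ η > (0:ℝ), ∃ X : ℝ, 0 < X ∧
      ∀ x ≥ X, ∀ lam ≥ (1:ℝ), l (lam * x) / l x ≤ Real.exp η * lam ^ η := by
  obtain ⟨h, hconv, huct⟩ := sv_h l hl_cont hl_pos hl_sv
  intro η hη
  obtain ⟨U, hU⟩ := potter_h h huct η hη
  refine ⟨Real.exp U, Real.exp_pos U, fun x hx lam hlam => ?_⟩
  have hx0 : 0 < x := lt_of_lt_of_le (Real.exp_pos U) hx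
  have hlam0 : 0 < lam := lt_of_lt_of_le one_pos hlam
  have hlogx : Real.log x ≥ U := by
    rw [← Real.log_exp U]
    exact Real.log_le_log (Real.exp_pos U) hx
  have ht0 : 0 ≤ Real.log lam := Real.log_nonneg hlam
  have hs := hU (Real.log x) hlogx (Real.log lam) ht0
  rw [hconv x hx0 lam hlam0]
  have hle : h (Real.log x + Real.log lam) - h (Real.log x) ≤ η * Real.log lam + η := by
    have := (abs_le.mp hs).2
    nlinarith
  calc Real.exp (h (Real.log x + Real.log lam) - h (Real.log x))
      ≤ Real.exp (η * Real.log lam + η) := Real.exp_le_exp.mpr hle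
    _ = Real.exp η * lam ^ η := by
        rw [Real.exp_add, Real.rpow_def_of_pos hlam0]
        ring_nf

private lemma triple_bound {K ρ σ θ : ℝ} (hθ : 0 < θ) (hθ1 : θ ≤ 1)
    (hK : |K - 1| < θ) (hρ : |ρ - 1| < θ) (hσ : |σ - 1| < θ) :
    |K * ρ * σ - 1| < 7 * θ := by
  obtain ⟨hKl, hKu⟩ := abs_lt.mp hK
  obtain ⟨hρl, hρu⟩ := abs_lt.mp hρ
  obtain ⟨hσl, hσu⟩ := abs_lt.mp hσ
  have hKpos : 0 < K := by linarith
  have hρpos : 0 < ρ := by linarith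
  have hσpos : 0 < σ := by linarith
  have hKρu : K * ρ < (1 + θ) * (1 + θ) := by nlinarith
  have hKρl : (1 - θ) * (1 - θ) < K * ρ := by nlinarith
  have hu : K * ρ * σ < (1 + θ) * (1 + θ) * (1 + θ) := by nlinarith
  have hls : (1 - θ) * (1 - θ) * (1 - θ) < K * ρ * σ := by nlinarith
  rw [abs_lt]
  constructor <;> nlinarith [sq_nonneg θ]

private lemma mul4_bound {K ρ Ap : ℝ} (hKpos : 0 < K) (hK2 : K < 2)
    (hρpos : 0 < ρ) (hρ2 : ρ < 2) (hAp : 0 < Ap) : K * ρ * Ap ≤ 4 * Ap := by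
  have h4 : K * ρ ≤ 4 := by nlinarith
  exact mul_le_mul_of_nonneg_right h4 hAp.le

/-- One-sided uniform convergence of the rescaled drift on `[0,R]`. -/
lemma oneSided (a : ℝ → ℝ) (β Ap : ℝ) (hβ0 : 0 < β) (hβ1 : β < 1) (hAp : 0 < Ap)
    (ha0 : a 0 = 0)
    (Lp l : ℝ → ℝ)
    (hl_cont : ContinuousOn l (Ioi 0)) (hl_pos : ∀ x > (0:ℝ), 0 < l x)
    (hl_sv : ∀ lam > (0:ℝ), Tendsto (fun x => l (lam * x) / l x) atTop (nhds 1))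
    (hform_p : ∀ x > (0:ℝ), a x = x ^ β * Lp x)
    (hLp_asymp : Tendsto (fun x => Lp x / (Ap * l (1 / x))) (nhdsWithin 0 (Ioi 0)) (nhds 1))
    (e' e'' : ℝ → ℝ)
    (hpos : ∀ ε ∈ Ioc (0:ℝ) 1, 0 < e' ε ∧ 0 < e'' ε)
    (he'' : Tendsto e'' (nhdsWithin 0 (Ioi 0)) (nhds 0))
    (hratio : Tendsto (fun ε => (e'' ε / e' ε) / ((e'' ε) ^ β * l (1 / e'' ε)))
      (nhdsWithin 0 (Ioi 0)) (nhds 1))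
    (R : ℝ) (hR : 0 < R) :
    ∀ η > (0:ℝ), ∀ᶠ ε in nhdsWithin 0 (Ioi 0),
      ∀ y ∈ Icc (0:ℝ) R, |(e' ε / e'' ε) * a (e'' ε * y) - Ap * y ^ β| < η := by
  intro η hη
  have hB : 0 < R ^ β := Real.rpow_pos_of_pos hR β
  set B : ℝ := R ^ β with hBdef
  set θ : ℝ := min 1 (η / (1 + 14 * B * Ap)) with hθdef
  have hθ : 0 < θ := lt_min one_pos (by positivity)
  have hθ1 : θ ≤ 1 := min_le_left _ _
  have hθη : 7 * (Ap * B) * θ < η := by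
    have h1 : θ ≤ η / (1 + 14 * B * Ap) := min_le_right _ _
    have h2 : (0:ℝ) < 1 + 14 * B * Ap := by positivity
    rw [le_div_iff₀ h2] at h1
    nlinarith
  -- Potter bound with exponent β/2
  obtain ⟨XP, hXP0, hXP⟩ := l_potter l hl_cont hl_pos hl_sv (β/2) (by linarith)
  set C1 : ℝ := 4 * Ap * Real.exp (β/2) with hC1def
  have hC1 : 0 < C1 := by positivity
  -- choose δ
  have hδev : ∀ᶠ δ in nhdsWithin (0:ℝ) (Ioi 0),
      (C1 * δ ^ (β/2) + Ap * δ ^ β < η ∧ δ ≤ 1 ∧ 0 < δ) := by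
    have ht1 : Tendsto (fun δ : ℝ => δ ^ (β/2)) (nhdsWithin 0 (Ioi 0)) (nhds 0) := by
      have := (Real.continuousAt_rpow_const 0 (β/2) (Or.inr (by linarith))).tendsto
      rw [Real.zero_rpow (by positivity : β/2 ≠ 0)] at this
      exact this.mono_left nhdsWithin_le_nhds
    have ht2 : Tendsto (fun δ : ℝ => δ ^ β) (nhdsWithin 0 (Ioi 0)) (nhds 0) := by
      have := (Real.continuousAt_rpow_const 0 β (Or.inr (by linarith))).tendsto
      rw [Real.zero_rpow (ne_of_gt hβ0)] at this
      exact this.mono_left nhdsWithin_le_nhds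
    have hsum : Tendsto (fun δ : ℝ => C1 * δ ^ (β/2) + Ap * δ ^ β)
        (nhdsWithin 0 (Ioi 0)) (nhds 0) := by
      have := (ht1.const_mul C1).add (ht2.const_mul Ap)
      simpa using this
    have hev1 := hsum.eventually_lt_const hη
    have hev2 : ∀ᶠ δ in nhdsWithin (0:ℝ) (Ioi 0), δ ≤ 1 ∧ 0 < δ := by
      have : Ioc (0:ℝ) 1 ∈ nhdsWithin (0:ℝ) (Ioi 0) := Ioc_mem_nhdsGT one_pos
      filter_upwards [this] with δ hδ
      exact ⟨hδ.2, hδ.1⟩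
    filter_upwards [hev1, hev2] with δ h1 h2 using ⟨h1, h2⟩
  obtain ⟨δ, hδ1, hδle1, hδ0⟩ := hδev.exists
  -- compact multiplier bound
  have hc : (0:ℝ) < (max R 1)⁻¹ := by positivity
  have hcd : (max R 1)⁻¹ ≤ δ⁻¹ := by
    have h1 : (max R 1)⁻¹ ≤ 1 := by
      rw [inv_le_one_iff₀]
      right; exact le_max_right R 1
    have h2 : (1:ℝ) ≤ δ⁻¹ := by
      rw [le_inv_comm₀ one_pos hδ0]
      simpa using hδle1
    linarith
  obtain ⟨XC, hXC0, hXC⟩ := l_compact l hl_cont hl_pos hl_sv ((max R 1)⁻¹) δ⁻¹ hc hcd θ hθ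
  -- uniform closeness of ρ
  rw [Metric.tendsto_nhdsWithin_nhds] at hLp_asymp
  obtain ⟨r, hr0, hr⟩ := hLp_asymp θ hθ
  -- K tends to 1
  have hP1 : Ioc (0:ℝ) 1 ∈ nhdsWithin (0:ℝ) (Ioi 0) := Ioc_mem_nhdsGT one_pos
  have hKtend : Tendsto (fun ε => e' ε * (e'' ε) ^ (β-1) * l (1 / e'' ε))
      (nhdsWithin (0:ℝ) (Ioi 0)) (nhds 1) := by
    have hGinv : Tendsto (fun ε => ((e'' ε / e' ε) / ((e'' ε) ^ β * l (1 / e'' ε)))⁻¹)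
        (nhdsWithin (0:ℝ) (Ioi 0)) (nhds 1) := by
      have := hratio.inv₀ one_ne_zero
      simpa using this
    apply hGinv.congr'
    filter_upwards [hP1] with ε hε
    obtain ⟨he'p, he''p⟩ := hpos ε hε
    have hl2 : 0 < l (1 / e'' ε) := hl_pos _ (by positivity)
    have hb : (0:ℝ) < (e'' ε) ^ β := Real.rpow_pos_of_pos he''p β
    rw [Real.rpow_sub_one (ne_of_gt he''p)]
    field_simp
  have hKev : ∀ᶠ ε in nhdsWithin (0:ℝ) (Ioi 0),
      |e' ε * (e'' ε) ^ (β-1) * l (1 / e'' ε) - 1| < θ := by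
    have := Metric.tendsto_nhds.mp hKtend θ hθ
    filter_upwards [this] with ε hε
    rw [Real.dist_eq] at hε
    exact hε
  -- smallness of e''
  set M : ℝ := max XP XC with hMdef
  have hM : 0 < M := lt_max_iff.mpr (Or.inl hXP0)
  have hev3 : ∀ᶠ ε in nhdsWithin (0:ℝ) (Ioi 0), e'' ε < r / R := he''.eventually_lt_const (by positivity)
  have hev4 : ∀ᶠ ε in nhdsWithin (0:ℝ) (Ioi 0), e'' ε < M⁻¹ := he''.eventually_lt_const (by positivity)
  -- main estimate
  filter_upwards [hP1, hKev, hev3, hev4] with ε hε hK he3 he4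
  obtain ⟨he'p, he''p⟩ := hpos ε hε
  intro y hy
  rcases hy.1.eq_or_lt with h0 | h0
  · -- y = 0
    rw [← h0]
    simp [ha0, Real.zero_rpow (ne_of_gt hβ0)]
    exact hη
  · -- y > 0
    have hx0 : 0 < e'' ε * y := by positivity
    have hl1 : 0 < l (1 / (e'' ε * y)) := hl_pos _ (by positivity)
    have hl2 : 0 < l (1 / e'' ε) := hl_pos _ (by positivity)
    set K : ℝ := e' ε * (e'' ε) ^ (β-1) * l (1 / e'' ε) with hKdef
    set ρ : ℝ := Lp (e'' ε * y) / (Ap * l (1 / (e'' ε * y))) with hρdef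
    set σ : ℝ := l (1 / (e'' ε * y)) / l (1 / e'' ε) with hσdef
    clear_value K ρ σ
    have hσpos : 0 < σ := by rw [hσdef]; exact div_pos hl1 hl2
    -- factorization
    have hfact : (e' ε / e'' ε) * a (e'' ε * y) = K * ρ * Ap * σ * y ^ β := by
      rw [hform_p (e'' ε * y) hx0]
      have h1 : (e'' ε * y) ^ β = (e'' ε) ^ β * y ^ β := Real.mul_rpow he''p.le h0.le
      have h2 : (e'' ε) ^ (β-1) = (e'' ε) ^ β / e'' ε := Real.rpow_sub_one (ne_of_gt he''p) β
      have hb : (0:ℝ) < (e'' ε) ^ β := Real.rpow_pos_of_pos he''p β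
      rw [hKdef, hρdef, hσdef, h1, h2]
      field_simp
    -- bound on ρ
    have hρ : |ρ - 1| < θ := by
      have hmem : e'' ε * y ∈ Ioi (0:ℝ) := hx0
      have hdist : dist (e'' ε * y) 0 < r := by
        rw [Real.dist_eq, sub_zero, abs_of_pos hx0]
        calc e'' ε * y ≤ e'' ε * R := by
              apply mul_le_mul_of_nonneg_left hy.2 he''p.le
          _ < (r / R) * R := by
              apply mul_lt_mul_of_pos_right he3 hR
          _ = r := by field_simp
      have := hr hmem hdist
      rw [Real.dist_eq] at this
      rw [hρdef]
      exact this
    have hρpos : 0 < ρ := by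
      have := abs_lt.mp hρ
      linarith
    have hρ2 : ρ < 2 := by
      have := abs_lt.mp hρ
      linarith
    have hKpos : 0 < K := by
      have := abs_lt.mp hK
      linarith
    have hK2 : K < 2 := by
      have := abs_lt.mp hK
      linarith
    have hyβB : y ^ β ≤ B := Real.rpow_le_rpow h0.le hy.2 hβ0.le
    have hyβpos : 0 < y ^ β := Real.rpow_pos_of_pos h0 β
    -- 1/e'' is large
    have hinv : M < 1 / e'' ε := by
      rw [lt_div_iff₀ he''p]
      calc M * e'' ε < M * M⁻¹ := by
            apply mul_lt_mul_of_pos_left he4 hM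
        _ = 1 := mul_inv_cancel₀ (ne_of_gt hM)
    have hmul : (1/y) * (1 / e'' ε) = 1 / (e'' ε * y) := by
      field_simp
    rw [hfact]
    by_cases hyδ : δ ≤ y
    · -- compact regime
      have hσ1 : |σ - 1| < θ := by
        have hlam : (1/y) ∈ Icc ((max R 1)⁻¹) δ⁻¹ := by
          constructor
          · rw [one_div]
            apply inv_anti₀ h0
            exact le_trans hy.2 (le_max_left R 1)
          · rw [one_div]
            exact inv_anti₀ hδ0 hyδ
        have := hXC (1 / e'' ε) (le_of_lt (lt_of_le_of_lt (le_max_right XP XC) hinv)) (1/y) hlam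
        rw [hmul] at this
        rw [hσdef]
        exact this
      have habs : |K * ρ * σ - 1| < 7 * θ := triple_bound hθ hθ1 hK hρ hσ1
      have hfacteq : K * ρ * Ap * σ * y ^ β - Ap * y ^ β = (Ap * y ^ β) * (K * ρ * σ - 1) := by
        ring
      rw [hfacteq, abs_mul, abs_of_pos (by positivity : (0:ℝ) < Ap * y ^ β)]
      calc Ap * y ^ β * |K * ρ * σ - 1| ≤ Ap * B * |K * ρ * σ - 1| := by
            apply mul_le_mul_of_nonneg_right _ (abs_nonneg _)
            apply mul_le_mul_of_nonneg_left hyβB hAp.le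
        _ < Ap * B * (7 * θ) := by
            apply mul_lt_mul_of_pos_left habs (by positivity)
        _ = 7 * (Ap * B) * θ := by ring
        _ < η := hθη
    · -- Potter regime: y < δ
      push_neg at hyδ
      have hy1 : (1:ℝ) ≤ 1/y := by
        rw [le_div_iff₀ h0, one_mul]
        linarith
      have hσP : σ ≤ Real.exp (β/2) * (1/y) ^ (β/2) := by
        have := hXP (1 / e'' ε) (le_of_lt (lt_of_le_of_lt (le_max_left XP XC) hinv)) (1/y) hy1
        rw [hmul] at this
        rw [hσdef]
        exact this
      have hrw : y ^ β * (1/y) ^ (β/2) = y ^ (β/2) := by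
        have hsplit : y ^ β = y ^ (β/2) * y ^ (β/2) := by
          rw [← Real.rpow_add h0]
          congr 1
          ring
        rw [hsplit, one_div, Real.inv_rpow h0.le, mul_assoc,
          mul_inv_cancel₀ (ne_of_gt (Real.rpow_pos_of_pos h0 (β/2))), mul_one]
      have hσy : σ * y ^ β ≤ Real.exp (β/2) * y ^ (β/2) := by
        calc σ * y ^ β ≤ (Real.exp (β/2) * (1/y) ^ (β/2)) * y ^ β :=
              mul_le_mul_of_nonneg_right hσP hyβpos.le
          _ = Real.exp (β/2) * (y ^ β * (1/y) ^ (β/2)) := by ring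
          _ = Real.exp (β/2) * y ^ (β/2) := by rw [hrw]
      have hKρ : K * ρ * Ap ≤ 4 * Ap := mul4_bound hKpos hK2 hρpos hρ2 hAp
      have hstep : K * ρ * Ap * σ * y ^ β ≤ C1 * y ^ (β/2) := by
        calc K * ρ * Ap * σ * y ^ β = (K * ρ * Ap) * (σ * y ^ β) := by ring
          _ ≤ (4 * Ap) * (Real.exp (β/2) * y ^ (β/2)) := by
              apply mul_le_mul hKρ hσy (by positivity) (by positivity)
          _ = C1 * y ^ (β/2) := by rw [hC1def]; ring
      have hmono1 : C1 * y ^ (β/2) ≤ C1 * δ ^ (β/2) := by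
        apply mul_le_mul_of_nonneg_left _ hC1.le
        exact Real.rpow_le_rpow h0.le hyδ.le (by linarith)
      have hmono2 : Ap * y ^ β ≤ Ap * δ ^ β := by
        apply mul_le_mul_of_nonneg_left _ hAp.le
        exact Real.rpow_le_rpow h0.le hyδ.le hβ0.le
      calc |K * ρ * Ap * σ * y ^ β - Ap * y ^ β|
          ≤ |K * ρ * Ap * σ * y ^ β| + |Ap * y ^ β| := abs_sub _ _
        _ = K * ρ * Ap * σ * y ^ β + Ap * y ^ β := by
            rw [abs_of_pos (by positivity), abs_of_pos (by positivity)]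
        _ ≤ C1 * δ ^ (β/2) + Ap * δ ^ β := by
            have := le_trans hstep hmono1
            linarith
        _ < η := hδ1

/-- Uniform convergence on compacts of the rescaled drift
`a_ε(y) = (ε'/ε'')·a(ε''·y)` to the model drift `ā(y) = ±A_±|y|^β`. -/
theorem stmt_15 (a : ℝ → ℝ) (β Ap Am Cg : ℝ)
    (hβ : β ∈ Set.Ioo (0:ℝ) 1) (hAp : 0 < Ap) (hAm : 0 < Am) (hCg : 0 < Cg)
    (ha_cont : Continuous a) (ha0 : a 0 = 0)
    (hgrowth : ∀ x, |a x| ≤ Cg * (1 + |x|))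
    (Lp Lm l : ℝ → ℝ)
    (hLp_cont : ContinuousOn Lp (Set.Ioi 0)) (hLp_pos : ∀ x > (0:ℝ), 0 < Lp x)
    (hLm_cont : ContinuousOn Lm (Set.Ioi 0)) (hLm_pos : ∀ x > (0:ℝ), 0 < Lm x)
    (hform_p : ∀ x > (0:ℝ), a x = x ^ β * Lp x)
    (hform_m : ∀ x < (0:ℝ), a x = -(|x| ^ β * Lm |x|))
    (hl_cont : ContinuousOn l (Set.Ioi 0)) (hl_pos : ∀ x > (0:ℝ), 0 < l x)
    (hl_sv : ∀ lam > (0:ℝ), Tendsto (fun x => l (lam * x) / l x) atTop (nhds 1))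
    (hLp_asymp : Tendsto (fun x => Lp x / (Ap * l (1 / x))) (nhdsWithin 0 (Set.Ioi 0)) (nhds 1))
    (hLm_asymp : Tendsto (fun x => Lm x / (Am * l (1 / x))) (nhdsWithin 0 (Set.Ioi 0)) (nhds 1))
    (e' e'' : ℝ → ℝ)
    (hpos : ∀ ε ∈ Set.Ioc (0:ℝ) 1, 0 < e' ε ∧ 0 < e'' ε)
    (he'' : Tendsto e'' (nhdsWithin 0 (Set.Ioi 0)) (nhds 0))
    (hratio : Tendsto (fun ε => (e'' ε / e' ε) / ((e'' ε) ^ β * l (1 / e'' ε)))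
      (nhdsWithin 0 (Set.Ioi 0)) (nhds 1)) :
    ∀ R > (0:ℝ),
      TendstoUniformlyOn (fun ε y => (e' ε / e'' ε) * a (e'' ε * y))
        (fun y => if 0 ≤ y then Ap * y ^ β else -(Am * |y| ^ β))
        (nhdsWithin 0 (Set.Ioi 0)) (Set.Icc (-R) R) := by
  intro R hR
  obtain ⟨hβ0, hβ1⟩ := hβ
  rw [Metric.tendstoUniformlyOn_iff]
  intro η hη
  have Hp := oneSided a β Ap hβ0 hβ1 hAp ha0 Lp l hl_cont hl_pos hl_sv hform_p hLp_asymp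
    e' e'' hpos he'' hratio R hR η hη
  set a2 : ℝ → ℝ := fun x => -a (-x) with ha2
  have ha20 : a2 0 = 0 := by simp [ha2, ha0]
  have hform2 : ∀ x > (0:ℝ), a2 x = x ^ β * Lm x := by
    intro x hx
    have hneg := hform_m (-x) (by linarith)
    rw [ha2]
    simp only []
    rw [hneg, abs_neg, abs_of_pos hx, neg_neg]
  have Hm := oneSided a2 β Am hβ0 hβ1 hAm ha20 Lm l hl_cont hl_pos hl_sv hform2 hLm_asymp
    e' e'' hpos he'' hratio R hR η hη
  filter_upwards [Hp, Hm] with ε hp hm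
  intro y hy
  rw [Real.dist_eq]
  by_cases hy0 : 0 ≤ y
  · rw [if_pos hy0]
    have := hp y ⟨hy0, hy.2⟩
    rw [abs_sub_comm] at this
    exact this
  · rw [if_neg hy0]
    push_neg at hy0
    have hmem : -y ∈ Icc (0:ℝ) R := ⟨by linarith, by linarith [hy.1]⟩
    have hthis := hm (-y) hmem
    have ha2e : a2 (e'' ε * -y) = -a (e'' ε * y) := by
      rw [ha2]
      simp only []
      rw [show -(e'' ε * -y) = e'' ε * y by ring]
    rw [ha2e] at hthis
    rw [abs_of_neg hy0]
    have heq : -(Am * (-y) ^ β) - (e' ε / e'' ε) * a (e'' ε * y)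
        = (e' ε / e'' ε) * -a (e'' ε * y) - Am * (-y) ^ β := by ring
    rw [heq]
    exact hthis
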